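/- Let n = 2k and F(x) = x^{d(2^k+1)} on F_{2^n}. If Tr^n_1(αF(x)) is bent for every α ∈ F_{2^n} \ F_{2^k}, then gcd(d, 2^k - 1) = 1, i.e., y ↦ y^d is a permutation of F_{2^k}. -/

import Mathlib

set_option linter.unusedSectionVars false
set_option linter.unnecessarySeqFocus false
open scoped Classical

open Finset

def chr (b : ZMod 2) : ℤ := if b = 0 then 1 else -1

variable {K : Type*} [Field K] [Fintype K] [Algebra (ZMod 2) K]

/-- The absolute trace `Tr^n_1 : F_{2^n} → F_2`. -/
noncomputable def tr (x : K) : ZMod 2 := Algebra.trace (ZMod 2) K x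

lemma chr_add (a b : ZMod 2) : chr (a + b) = chr a * chr b := by fin_cases a <;> fin_cases b <;> rfl
lemma chr_zero : chr 0 = 1 := rfl
lemma chr_one : chr 1 = -1 := rfl

lemma tr_add (x y : K) : tr (x + y) = tr x + tr y := map_add _ _ _
lemma tr_zero : tr (0 : K) = 0 := map_zero _

lemma tr_sq [CharP K 2] (x : K) : tr (x ^ 2) = tr x := by
  let e : K ≃ₐ[ZMod 2] K := AlgEquiv.ofRingEquiv (f := (frobeniusEquiv K 2 : K ≃+* K))
    (fun r => by
      show (frobeniusEquiv K 2) (algebraMap (ZMod 2) K r) = _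
      rw [frobeniusEquiv_apply, frobenius_def, ← map_pow, ZMod.pow_card])
  have h := Algebra.trace_eq_of_algEquiv e x
  have hex : e x = x ^ 2 := by
    show (frobeniusEquiv K 2) x = x ^ 2
    simp [frobeniusEquiv_apply, frobenius_def]
  rw [tr, tr, ← hex]; exact h

lemma tr_pow2 [CharP K 2] (m : ℕ) (x : K) : tr (x ^ 2 ^ m) = tr x := by
  induction m with
  | zero => simp
  | succ m ih => rw [pow_succ, pow_mul, tr_sq, ih]

lemma tr_exists_one [CharP K 2] : ∃ y : K, tr y = 1 := by
  haveI : FiniteDimensional (ZMod 2) K := Module.Finite.of_finite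
  have h := Algebra.trace_ne_zero (ZMod 2) K
  have : ∃ y : K, tr y ≠ 0 := by
    by_contra hc
    push_neg at hc
    exact h (LinearMap.ext fun y => hc y)
  obtain ⟨y, hy⟩ := this
  refine ⟨y, ?_⟩
  have : ∀ a : ZMod 2, a ≠ 0 → a = 1 := by decide
  exact this _ hy

-- orthogonality
lemma ortho [CharP K 2] {c : K} (hc : c ≠ 0) : ∑ x : K, chr (tr (c * x)) = 0 := by
  obtain ⟨y, hy⟩ := tr_exists_one (K := K)
  set y0 : K := c⁻¹ * y with hy0
  have hcy0 : tr (c * y0) = 1 := by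
    rw [hy0, ← mul_assoc, mul_inv_cancel₀ hc, one_mul]; exact hy
  have key : ∑ x : K, chr (tr (c * x)) = ∑ x : K, chr (tr (c * (x + y0))) :=
    (Fintype.sum_equiv (Equiv.addRight y0) _ _ (fun x => rfl)).symm
  have key2 : ∀ x : K, chr (tr (c * (x + y0))) = - chr (tr (c * x)) := by
    intro x
    rw [mul_add, tr_add, chr_add, hcy0, chr_one]
    ring
  rw [Finset.sum_congr rfl (fun x _ => key2 x), Finset.sum_neg_distrib] at key
  linarith

-- root counting
lemma card_roots_le (p : Polynomial K) (hp : p ≠ 0) :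
    (univ.filter (fun x : K => p.eval x = 0)).card ≤ p.natDegree := by
  classical
  calc (univ.filter (fun x : K => p.eval x = 0)).card
      ≤ p.roots.toFinset.card := by
        apply Finset.card_le_card
        intro x hx
        simp only [Finset.mem_filter] at hx
        simp [Multiset.mem_toFinset, Polynomial.mem_roots, hp, hx.2]
    _ ≤ Multiset.card p.roots := Multiset.toFinset_card_le _
    _ ≤ p.natDegree := p.card_roots'

lemma pow_qq [CharP K 2] {k : ℕ} (hcard : Fintype.card K = 2 ^ (2 * k)) (x : K) :
    x ^ (2 ^ k * 2 ^ k) = x := by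
  have h := FiniteField.pow_card x
  rwa [hcard, two_mul, pow_add] at h

lemma Lcard [CharP K 2] {k : ℕ} (hk : 0 < k) (hcard : Fintype.card K = 2 ^ (2 * k)) :
    (univ.filter (fun y : K => y ^ 2 ^ k = y)).card = 2 ^ k ∧
      (∀ w : K, w ^ 2 ^ k = w → ∃ v : K, v ^ 2 ^ k + v = w) := by
  haveI : Fact (Nat.Prime 2) := ⟨Nat.prime_two⟩
  set q : ℕ := 2 ^ k with hq
  have hq2 : 2 ≤ q := by
    have := Nat.one_lt_two_pow (n := k) (by omega)
    omega
  set L : Finset K := univ.filter (fun y : K => y ^ q = y) with hL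
  set ψ : K → K := fun v => v ^ q + v with hψ
  have frob : ∀ a b : K, (a + b) ^ q = a ^ q + b ^ q := fun a b => add_pow_char_pow ..
  have hself : ∀ a : K, a + a = 0 := CharTwo.add_self_eq_zero
  have hcancel : ∀ a b : K, a + b = 0 → a = b := by
    intro a b h
    have := congrArg (· + b) h
    simpa [add_assoc, hself] using this
  have hψadd : ∀ a b : K, ψ (a + b) = ψ a + ψ b := by
    intro a b
    show (a + b) ^ q + (a + b) = (a ^ q + a) + (b ^ q + b)
    rw [frob]; ring
  -- L.card ≤ q
  have hLle : L.card ≤ q := by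
    have hdeg : (Polynomial.X ^ q - Polynomial.X : Polynomial K).natDegree = q := by
      rw [Polynomial.natDegree_sub_eq_left_of_natDegree_lt] <;>
        simp [Polynomial.natDegree_X_pow, Polynomial.natDegree_X] <;> omega
    have hne : (Polynomial.X ^ q - Polynomial.X : Polynomial K) ≠ 0 :=
      Polynomial.ne_zero_of_natDegree_gt (n := 0) (by omega)
    have hroots := card_roots_le (K := K) (Polynomial.X ^ q - Polynomial.X) hne
    rw [hdeg] at hroots
    refine le_trans (Finset.card_le_card ?_) hroots
    intro x hx
    simp only [hL, mem_filter, mem_univ, true_and] at hx ⊢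
    simp [sub_eq_zero, hx]
  -- ψ maps into L
  have hψL : ∀ v : K, ψ v ∈ L := by
    intro v
    simp only [hL, mem_filter, mem_univ, true_and]
    show (v ^ q + v) ^ q = v ^ q + v
    rw [frob, ← pow_mul, pow_qq hcard, add_comm]
  have hψzero : ∀ w : K, w ∈ L → ψ w = 0 := by
    intro w hw
    simp only [hL, mem_filter, mem_univ, true_and] at hw
    show w ^ q + w = 0
    rw [hw]; exact hself w
  -- fibers of ψ have card L.card
  have hfibcard : ∀ z ∈ univ.image ψ, (univ.filter (fun v => ψ v = z)).card = L.card := by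
    intro z hz
    obtain ⟨a, -, ha⟩ := Finset.mem_image.mp hz
    apply Finset.card_bij (fun x _ => x + a)
    · intro x hx
      simp only [mem_filter, mem_univ, true_and] at hx
      have h0 : ψ (x + a) = 0 := by rw [hψadd, hx, ha, hself]
      simp only [hL, mem_filter, mem_univ, true_and]
      exact hcancel _ _ h0
    · intro w1 h1 w2 h2 h
      exact add_right_cancel h
    · intro w hw
      refine ⟨w + a, ?_, by rw [add_assoc, hself, add_zero]⟩
      simp only [mem_filter, mem_univ, true_and]
      rw [hψadd, hψzero w hw, zero_add, ha]
  have hcount : q * q = (univ.image ψ).card * L.card := by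
    have h1 : (univ : Finset K).card = ∑ z ∈ univ.image ψ, (univ.filter (fun v => ψ v = z)).card :=
      Finset.card_eq_sum_card_fiberwise (fun x _ => Finset.mem_image_of_mem ψ (mem_univ x))
    rw [Finset.sum_congr rfl hfibcard, Finset.sum_const, smul_eq_mul] at h1
    rw [← h1, Finset.card_univ, hcard, two_mul, pow_add]
  have hIle : (univ.image ψ).card ≤ L.card :=
    Finset.card_le_card (fun z hz => by
      obtain ⟨a, -, ha⟩ := Finset.mem_image.mp hz
      exact ha ▸ hψL a)
  have hLq : L.card = q := by
    by_contra h
    have hlt : L.card < q := lt_of_le_of_ne hLle h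
    have h1 : (univ.image ψ).card * L.card ≤ L.card * L.card :=
      Nat.mul_le_mul_right _ hIle
    have h2 : L.card * L.card < q * q := by
      calc L.card * L.card ≤ L.card * q := Nat.mul_le_mul_left _ (le_of_lt hlt)
        _ < q * q := Nat.mul_lt_mul_of_lt_of_le hlt (le_refl q) (by omega)
    exact lt_irrefl _ (hcount ▸ lt_of_le_of_lt h1 h2)
  have hIq : (univ.image ψ).card = q := by
    apply Nat.eq_of_mul_eq_mul_right (show 0 < q by omega)
    rw [← hLq, ← hcount, hLq]
  have himage : univ.image ψ = L :=
    Finset.eq_of_subset_of_card_le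
      (fun z hz => by obtain ⟨a, -, ha⟩ := Finset.mem_image.mp hz; exact ha ▸ hψL a)
      (by rw [hLq, hIq])
  refine ⟨hLq, fun w hw => ?_⟩
  have hwL : w ∈ L := by simp [hL, hw]
  rw [← himage] at hwL
  obtain ⟨v, -, hv⟩ := Finset.mem_image.mp hwL
  exact ⟨v, hv⟩

lemma Ls_card [CharP K 2] {k : ℕ} (hk : 0 < k) (hcard : Fintype.card K = 2 ^ (2 * k)) :
    (univ.filter (fun y : K => y ^ 2 ^ k = y ∧ y ≠ 0)).card = 2 ^ k - 1 := by
  have h0L : (0 : K) ^ 2 ^ k = 0 := zero_pow (by positivity)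
  have : univ.filter (fun y : K => y ^ 2 ^ k = y ∧ y ≠ 0)
      = (univ.filter (fun y : K => y ^ 2 ^ k = y)).erase 0 := by
    ext x
    simp only [mem_filter, mem_univ, true_and, Finset.mem_erase]
    tauto
  rw [this, Finset.card_erase_of_mem (by simp [h0L]), (Lcard hk hcard).1]

lemma norm_sum [CharP K 2] {k : ℕ} (hk : 0 < k) (hcard : Fintype.card K = 2 ^ (2 * k))
    (g : K → ℤ) :
    ∑ x ∈ univ.filter (fun x : K => x ≠ 0), g (x ^ (2 ^ k + 1)) =
      ((2 ^ k + 1 : ℕ) : ℤ) * ∑ u ∈ univ.filter (fun u : K => u ^ 2 ^ k = u ∧ u ≠ 0), g u := by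
  haveI : Fact (Nat.Prime 2) := ⟨Nat.prime_two⟩
  set q : ℕ := 2 ^ k with hq
  have hq2 : 2 ≤ q := by
    have := Nat.one_lt_two_pow (n := k) (by omega)
    omega
  set Ls : Finset K := univ.filter (fun u : K => u ^ q = u ∧ u ≠ 0) with hLs
  set K0 : Finset K := univ.filter (fun x : K => x ≠ 0) with hK0
  set N : K → K := fun x => x ^ (q + 1) with hN
  set U : Finset K := univ.filter (fun x : K => x ^ (q + 1) = 1) with hU
  have hLscard : Ls.card = q - 1 := Ls_card hk hcard
  have hK0card : K0.card = q * q - 1 := by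
    rw [hK0, Finset.filter_ne', Finset.card_erase_of_mem (mem_univ 0), Finset.card_univ, hcard,
      two_mul, pow_add]
  -- N maps K0 into Ls
  have hNLs : ∀ x : K, x ≠ 0 → N x ∈ Ls := by
    intro x hx
    simp only [hLs, mem_filter, mem_univ, true_and]
    constructor
    · show (x ^ (q + 1)) ^ q = x ^ (q + 1)
      rw [← pow_mul, add_mul, one_mul, pow_add, pow_qq hcard]
      exact (pow_succ' x q).symm
    · exact pow_ne_zero _ hx
  -- U card bound
  have hUle : U.card ≤ q + 1 := by
    have hne : (Polynomial.X ^ (q + 1) - Polynomial.C 1 : Polynomial K) ≠ 0 :=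
      Polynomial.X_pow_sub_C_ne_zero (by omega) 1
    have hroots := card_roots_le (K := K) (Polynomial.X ^ (q + 1) - Polynomial.C 1) hne
    rw [Polynomial.natDegree_X_pow_sub_C] at hroots
    refine le_trans (Finset.card_le_card ?_) hroots
    intro x hx
    simp only [hU, mem_filter, mem_univ, true_and] at hx ⊢
    simp [sub_eq_zero, hx]
  -- fibers over the image have card U.card
  have hfibcard : ∀ z ∈ K0.image N, (K0.filter (fun x => N x = z)).card = U.card := by
    intro z hz
    obtain ⟨a, haK0, ha⟩ := Finset.mem_image.mp hz
    simp only [hK0, mem_filter, mem_univ, true_and] at haK0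
    apply Finset.card_bij (fun x _ => x * a⁻¹)
    · intro x hx
      simp only [hK0, mem_filter, mem_univ, true_and] at hx
      simp only [hU, mem_filter, mem_univ, true_and]
      show (x * a⁻¹) ^ (q + 1) = 1
      have hx2 : x ^ (q + 1) = z := hx.2
      have ha' : a ^ (q + 1) = z := ha
      rw [mul_pow, inv_pow, hx2, ← ha']
      exact mul_inv_cancel₀ (pow_ne_zero _ haK0)
    · intro x1 h1 x2 h2 h
      exact mul_right_cancel₀ (inv_ne_zero haK0) h
    · intro t ht
      simp only [hU, mem_filter, mem_univ, true_and] at ht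
      refine ⟨t * a, ?_, by field_simp⟩
      simp only [hK0, mem_filter, mem_univ, true_and]
      constructor
      · apply mul_ne_zero _ haK0
        intro h0
        rw [h0] at ht
        simp [zero_pow] at ht
      · show (t * a) ^ (q + 1) = z
        rw [mul_pow, ht, one_mul]
        exact ha
  -- counting
  have hcount : q * q - 1 = (K0.image N).card * U.card := by
    have h1 : K0.card = ∑ z ∈ K0.image N, (K0.filter (fun x => N x = z)).card :=
      Finset.card_eq_sum_card_fiberwise (fun x hx => Finset.mem_image_of_mem N hx)
    rw [Finset.sum_congr rfl hfibcard, Finset.sum_const, smul_eq_mul] at h1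
    rw [← h1, hK0card]
  have hIle : (K0.image N).card ≤ q - 1 := by
    rw [← hLscard]
    apply Finset.card_le_card
    intro z hz
    obtain ⟨a, haK0, ha⟩ := Finset.mem_image.mp hz
    simp only [hK0, mem_filter, mem_univ, true_and] at haK0
    exact ha ▸ hNLs a haK0
  have hqq : (q - 1) * (q + 1) = q * q - 1 := by
    have h1 : 1 ≤ q := by omega
    have h2 : 1 ≤ q * q := Nat.one_le_iff_ne_zero.mpr (by positivity)
    zify [h1, h2]
    ring
  have hUcard : U.card = q + 1 := by
    by_contra h
    have hlt : U.card < q + 1 := lt_of_le_of_ne hUle h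
    have : (K0.image N).card * U.card < q * q - 1 := by
      calc (K0.image N).card * U.card ≤ (q - 1) * U.card := Nat.mul_le_mul_right _ hIle
        _ < (q - 1) * (q + 1) := Nat.mul_lt_mul_of_le_of_lt (le_refl _) hlt (by omega)
        _ = q * q - 1 := hqq
    omega
  have hI : (K0.image N).card = q - 1 := by
    apply Nat.eq_of_mul_eq_mul_right (show 0 < q + 1 by omega)
    rw [← hUcard, ← hcount, hUcard, hqq]
  have himage : K0.image N = Ls := by
    apply Finset.eq_of_subset_of_card_le
    · intro z hz
      obtain ⟨a, haK0, ha⟩ := Finset.mem_image.mp hz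
      simp only [hK0, mem_filter, mem_univ, true_and] at haK0
      exact ha ▸ hNLs a haK0
    · rw [hLscard, hI]
  -- the sum identity
  have hswap : ∑ u ∈ Ls, ∑ x ∈ K0.filter (fun x => N x = u), g (N x) = ∑ x ∈ K0, g (N x) := by
    apply Finset.sum_fiberwise_of_maps_to
    intro x hx
    simp only [hK0, mem_filter, mem_univ, true_and] at hx
    exact hNLs x hx
  have hinner : ∀ u ∈ Ls, ∑ x ∈ K0.filter (fun x => N x = u), g (N x)
      = ((q + 1 : ℕ) : ℤ) * g u := by
    intro u hu
    have : ∀ x ∈ K0.filter (fun x => N x = u), g (N x) = g u := by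
      intro x hx
      simp only [mem_filter] at hx
      rw [hx.2]
    rw [Finset.sum_congr rfl this, Finset.sum_const, hfibcard u (himage ▸ hu), hUcard]
    simp
  calc ∑ x ∈ K0, g (x ^ (q + 1)) = ∑ x ∈ K0, g (N x) := rfl
    _ = ∑ u ∈ Ls, ∑ x ∈ K0.filter (fun x => N x = u), g (N x) := hswap.symm
    _ = ∑ u ∈ Ls, ((q + 1 : ℕ) : ℤ) * g u := Finset.sum_congr rfl hinner
    _ = ((q + 1 : ℕ) : ℤ) * ∑ u ∈ Ls, g u := by rw [Finset.mul_sum]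


/-- The Walsh transform of a Boolean function `f` on `K = F_{2^n}`. -/
noncomputable def walshF (f : K → ZMod 2) (l : K) : ℤ :=
  ∑ x, chr (f x + tr (l * x))

/-- `f` is bent on `K = F_{2^{2k}}`: all Walsh values are `±2^k`. -/
def IsBentF (k : ℕ) (f : K → ZMod 2) : Prop :=
  ∀ l : K, walshF f l = 2 ^ k ∨ walshF f l = -(2 ^ k)

theorem stmt5 (k : ℕ) (hk : 0 < k) (hcard : Fintype.card K = 2 ^ (2 * k)) (d : ℕ)
    (hbent : ∀ α : K, α ^ (2 ^ k) ≠ α →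
      IsBentF k (fun x => tr (α * x ^ (d * (2 ^ k + 1))))) :
    Nat.gcd d (2 ^ k - 1) = 1 ∧
      Set.BijOn (fun y => y ^ d) {y : K | y ^ (2 ^ k) = y} {y : K | y ^ (2 ^ k) = y} := by
  haveI : CharP K 2 := charP_of_injective_algebraMap (algebraMap (ZMod 2) K).injective 2
  haveI : Fact (Nat.Prime 2) := ⟨Nat.prime_two⟩
  set q : ℕ := 2 ^ k with hqdef
  have hq2 : 2 ≤ q := by
    have := Nat.one_lt_two_pow (n := k) (by omega)
    omega
  set L : Finset K := univ.filter (fun y : K => y ^ q = y) with hL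
  set Ls : Finset K := univ.filter (fun u : K => u ^ q = u ∧ u ≠ 0) with hLs
  have hLcard : L.card = q := (Lcard hk hcard).1
  have hLscard : Ls.card = q - 1 := Ls_card hk hcard
  -- trace vanishes on L
  have htrL : ∀ w : K, w ^ q = w → tr w = 0 := by
    intro w hw
    obtain ⟨v, hv⟩ := (Lcard hk hcard).2 w hw
    rw [← hv, tr_add, tr_pow2]
    exact CharTwo.add_self_eq_zero _
  -- there is α outside the subfield
  have hexα : ∃ α : K, α ^ q ≠ α := by
    by_contra h
    push_neg at h
    have hLuniv : L = univ := by
      rw [hL, Finset.filter_true_of_mem (fun x _ => h x)]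
    have : (univ : Finset K).card = q := by rw [← hLuniv, hLcard]
    rw [Finset.card_univ, hcard, two_mul, pow_add, ← hqdef] at this
    nlinarith [this, hq2]
  -- walsh at 0
  have hwalsh0 : ∀ f : K → ZMod 2, walshF f 0 = ∑ x : K, chr (f x) := by
    intro f
    unfold walshF
    apply Finset.sum_congr rfl
    intro x _
    rw [zero_mul, tr_zero, add_zero]
  have hchr : ∀ b : ZMod 2, chr b = 1 ∨ chr b = -1 := by decide
  -- d is positive
  have hd : d ≠ 0 := by
    rintro rfl
    obtain ⟨α, hα⟩ := hexα
    have hb := hbent α hα 0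
    rw [hwalsh0] at hb
    have hsum : ∑ x : K, chr (tr (α * x ^ (0 * (q + 1)))) = (q * q : ℕ) * chr (tr α) := by
      rw [Finset.sum_congr rfl (fun x _ => by rw [zero_mul, pow_zero, mul_one]),
        Finset.sum_const, Finset.card_univ, hcard, two_mul, pow_add, nsmul_eq_mul]
    rw [hsum] at hb
    have hQ : (2 : ℤ) ≤ (q : ℤ) := by exact_mod_cast hq2
    have hq' : ((2 : ℤ)) ^ k = (q : ℤ) := by push_cast [hqdef]; ring
    rcases hchr (tr α) with h1 | h1 <;> rw [h1] at hb <;> rw [hq'] at hb <;>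
      rcases hb with hb | hb <;> push_cast at hb <;> nlinarith
  -- main character sum value for α outside subfield
  have hS : ∀ α : K, α ^ q ≠ α → ∑ u ∈ Ls, chr (tr (α * u ^ d)) = -1 := by
    intro α hα
    have hb := hbent α hα 0
    rw [hwalsh0] at hb
    set S : ℤ := ∑ u ∈ Ls, chr (tr (α * u ^ d)) with hSdef
    have hsplit : ∑ x : K, chr (tr (α * x ^ (d * (q + 1))))
        = 1 + ∑ x ∈ univ.filter (fun x : K => x ≠ 0), chr (tr (α * x ^ (d * (q + 1)))) := by
      rw [Finset.filter_ne']
      rw [← Finset.add_sum_erase univ _ (mem_univ (0 : K))]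
      congr 1
      rw [zero_pow (by positivity), mul_zero, tr_zero, chr_zero]
    have hnz : ∀ x : K, x ≠ 0 → chr (tr (α * x ^ (d * (q + 1))))
        = chr (tr (α * (x ^ (q + 1)) ^ d)) := by
      intro x _
      rw [← pow_mul, mul_comm (q + 1) d]
    have hns := norm_sum hk hcard (fun u => chr (tr (α * u ^ d)))
    have : ∑ x : K, chr (tr (α * x ^ (d * (q + 1)))) = 1 + ((q + 1 : ℕ) : ℤ) * S := by
      rw [hsplit, Finset.sum_congr rfl (fun x hx => hnz x (by simpa using hx))]
      rw [hns]
    rw [this] at hb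
    have hq' : ((2 : ℤ)) ^ k = (q : ℤ) := by push_cast [hqdef]; ring
    rw [hq'] at hb
    have hQ : (2 : ℤ) ≤ (q : ℤ) := by exact_mod_cast hq2
    rcases hb with hb | hb
    · exfalso
      push_cast at hb
      have h1 : ((q : ℤ) + 1) * S = (q : ℤ) - 1 := by linarith
      have h2 : S = 0 ∨ S ≥ 1 ∨ S ≤ -1 := by omega
      rcases h2 with h2 | h2 | h2
      · rw [h2] at h1; nlinarith
      · nlinarith
      · nlinarith
    · push_cast at hb
      have h1 : ((q : ℤ) + 1) * S = ((q : ℤ) + 1) * (-1) := by linarith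
      exact mul_left_cancel₀ (by omega) h1
  -- the fiber count
  have hT : ∀ u0 : K, u0 ^ q = u0 → u0 ≠ 0 → (Ls.filter (fun u => u ^ d = u0)).card = 1 := by
    intro u0 hu0q hu00
    set T : ℤ := ∑ α : K, chr (tr (α * u0)) * (∑ u ∈ Ls, chr (tr (α * u ^ d))) with hTdef
    -- way 1
    have hway1 : T = (q * q : ℕ) * ((Ls.filter (fun u => u ^ d = u0)).card : ℤ) := by
      have h1 : T = ∑ u ∈ Ls, ∑ α : K, chr (tr (α * (u0 + u ^ d))) := by
        rw [hTdef]
        rw [Finset.sum_congr rfl (fun α (_ : α ∈ univ) => Finset.mul_sum Ls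
          (fun u => chr (tr (α * u ^ d))) (chr (tr (α * u0))))]
        rw [Finset.sum_comm]
        apply Finset.sum_congr rfl
        intro u _
        apply Finset.sum_congr rfl
        intro α _
        rw [mul_add, tr_add, chr_add]
      have h2 : ∀ u ∈ Ls, ∑ α : K, chr (tr (α * (u0 + u ^ d)))
          = if u ^ d = u0 then ((q * q : ℕ) : ℤ) else 0 := by
        intro u _
        by_cases hcase : u ^ d = u0
        · rw [if_pos hcase]
          have : u0 + u ^ d = 0 := by rw [hcase]; exact CharTwo.add_self_eq_zero _
          rw [Finset.sum_congr rfl (fun α _ => by rw [this, mul_zero, tr_zero, chr_zero]),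
            Finset.sum_const, Finset.card_univ, hcard, two_mul, pow_add, nsmul_eq_mul, mul_one]
        · rw [if_neg hcase]
          have hne : u0 + u ^ d ≠ 0 := by
            intro h0
            apply hcase
            have h2 := congrArg (fun t => u0 + t) h0
            simpa [← add_assoc, CharTwo.add_self_eq_zero] using h2
          have := ortho (K := K) hne
          rw [← this]
          apply Finset.sum_congr rfl
          intro α _
          rw [mul_comm]
      rw [h1, Finset.sum_congr rfl h2, Finset.sum_ite, Finset.sum_const, Finset.sum_const,
        smul_zero, add_zero, nsmul_eq_mul]
      ring
    -- way 2
    have hmemL : ∀ α u : K, α ^ q = α → u ^ q = u → (α * u) ^ q = α * u := by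
      intro α u ha hu
      rw [mul_pow, ha, hu]
    have hpowL : ∀ u : K, u ^ q = u → (u ^ d) ^ q = u ^ d := by
      intro u hu
      rw [← pow_mul, mul_comm d q, pow_mul, hu]
    have hway2 : T = (q : ℤ) * ((q : ℤ) - 1) + (q : ℤ) := by
      have hdecomp : T = (∑ α ∈ L, chr (tr (α * u0)) * (∑ u ∈ Ls, chr (tr (α * u ^ d))))
          + ∑ α ∈ univ.filter (fun α : K => ¬ (α ^ q = α)),
              chr (tr (α * u0)) * (∑ u ∈ Ls, chr (tr (α * u ^ d))) := by
        rw [hTdef, hL, ← Finset.sum_filter_add_sum_filter_not univ (fun α : K => α ^ q = α)]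
      have hin : ∀ α ∈ L, chr (tr (α * u0)) * (∑ u ∈ Ls, chr (tr (α * u ^ d)))
          = ((q : ℤ) - 1) := by
        intro α hαL
        simp only [hL, mem_filter, mem_univ, true_and] at hαL
        have e1 : chr (tr (α * u0)) = 1 := by
          rw [htrL _ (hmemL α u0 hαL hu0q), chr_zero]
        have e2 : ∀ u ∈ Ls, chr (tr (α * u ^ d)) = 1 := by
          intro u hu
          simp only [hLs, mem_filter, mem_univ, true_and] at hu
          rw [htrL _ (hmemL α (u ^ d) hαL (hpowL u hu.1)), chr_zero]
        rw [e1, one_mul, Finset.sum_congr rfl e2, Finset.sum_const, hLscard]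
        simp only [nsmul_eq_mul, mul_one]
        push_cast [Nat.cast_sub (by omega : 1 ≤ q)]
        ring
      have hout : ∀ α ∈ univ.filter (fun α : K => ¬ (α ^ q = α)),
          chr (tr (α * u0)) * (∑ u ∈ Ls, chr (tr (α * u ^ d)))
            = - chr (tr (α * u0)) := by
        intro α hα
        simp only [mem_filter, mem_univ, true_and] at hα
        rw [hS α hα]
        ring
      have houtsum : ∑ α ∈ univ.filter (fun α : K => ¬ (α ^ q = α)), chr (tr (α * u0))
          = - (q : ℤ) := by
        have hfull : ∑ α : K, chr (tr (α * u0)) = 0 := by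
          have := ortho (K := K) hu00
          rw [← this]
          exact Finset.sum_congr rfl (fun α _ => by rw [mul_comm])
        have hLsum : ∑ α ∈ L, chr (tr (α * u0)) = (q : ℤ) := by
          have : ∀ α ∈ L, chr (tr (α * u0)) = 1 := by
            intro α hαL
            simp only [hL, mem_filter, mem_univ, true_and] at hαL
            rw [htrL _ (hmemL α u0 hαL hu0q), chr_zero]
          rw [Finset.sum_congr rfl this, Finset.sum_const, hLcard]
          simp
        have hsplit2 := Finset.sum_filter_add_sum_filter_not univ (fun α : K => α ^ q = α)
          (fun α => chr (tr (α * u0)))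
        rw [hfull] at hsplit2
        rw [hL] at hLsum
        linarith [hsplit2, hLsum]
      rw [hdecomp, Finset.sum_congr rfl hin, Finset.sum_congr rfl
        (fun α hα => hout α hα), Finset.sum_const, hLcard, Finset.sum_neg_distrib, houtsum]
      simp only [nsmul_eq_mul]
      ring
    -- combine
    have hcombine : ((q * q : ℕ) : ℤ) * ((Ls.filter (fun u => u ^ d = u0)).card : ℤ)
        = ((q * q : ℕ) : ℤ) * 1 := by
      rw [← hway1, hway2]
      push_cast
      ring
    have := mul_left_cancel₀ (by positivity : ((q * q : ℕ) : ℤ) ≠ 0) hcombine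
    exact_mod_cast this
  -- bijectivity on the subfield
  have hmaps : Set.MapsTo (fun y : K => y ^ d) {y : K | y ^ q = y} {y : K | y ^ q = y} := by
    intro y hy
    simp only [Set.mem_setOf_eq] at hy ⊢
    rw [← pow_mul, mul_comm d q, pow_mul, hy]
  have hinj : Set.InjOn (fun y : K => y ^ d) {y : K | y ^ q = y} := by
    intro y1 h1 y2 h2 h
    simp only [Set.mem_setOf_eq] at h1 h2
    simp only at h
    by_cases hz1 : y1 = 0
    · subst hz1
      rw [zero_pow hd] at h
      exact (pow_eq_zero_iff hd).mp h.symm |>.symm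
    · by_cases hz2 : y2 = 0
      · subst hz2
        rw [zero_pow hd] at h
        exact absurd ((pow_eq_zero_iff hd).mp h) hz1
      · have hu0q : (y1 ^ d) ^ q = y1 ^ d := by
          rw [← pow_mul, mul_comm d q, pow_mul, h1]
        have hu00 : y1 ^ d ≠ 0 := pow_ne_zero _ hz1
        have hcard1 := hT (y1 ^ d) hu0q hu00
        have hm1 : y1 ∈ Ls.filter (fun u => u ^ d = y1 ^ d) := by
          simp only [hLs, Finset.mem_filter, mem_univ, true_and]
          exact ⟨⟨h1, hz1⟩, trivial⟩
        have hm2 : y2 ∈ Ls.filter (fun u => u ^ d = y1 ^ d) := by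
          simp only [hLs, Finset.mem_filter, mem_univ, true_and]
          exact ⟨⟨h2, hz2⟩, h.symm⟩
        exact Finset.card_le_one.mp (le_of_eq hcard1) y1 hm1 y2 hm2
  have hsurj : Set.SurjOn (fun y : K => y ^ d) {y : K | y ^ q = y} {y : K | y ^ q = y} := by
    intro w hw
    simp only [Set.mem_setOf_eq] at hw
    by_cases hz : w = 0
    · refine ⟨0, ?_, ?_⟩
      · simp only [Set.mem_setOf_eq]
        exact zero_pow (by positivity)
      · simp only
        rw [zero_pow hd, hz]
    · have hcard1 := hT w hw hz
      have hpos : 0 < (Ls.filter (fun u => u ^ d = w)).card := by omega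
      obtain ⟨u, hu⟩ := Finset.card_pos.mp hpos
      simp only [hLs, Finset.mem_filter, mem_univ, true_and] at hu
      exact ⟨u, hu.1.1, hu.2⟩
  -- gcd
  have hgcd : Nat.gcd d (q - 1) = 1 := by
    by_contra hg
    obtain ⟨p, hp, hpdvd⟩ := Nat.exists_prime_and_dvd hg
    haveI : Fact p.Prime := ⟨hp⟩
    have hpd : p ∣ d := hpdvd.trans (Nat.gcd_dvd_left _ _)
    have hpq : p ∣ q - 1 := hpdvd.trans (Nat.gcd_dvd_right _ _)
    have hcardu : Fintype.card Kˣ = q * q - 1 := by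
      rw [Fintype.card_units, hcard, two_mul, pow_add]
    have hpu : p ∣ Fintype.card Kˣ := by
      rw [hcardu]
      have : q * q - 1 = (q - 1) * (q + 1) := by
        have h1 : 1 ≤ q := by omega
        have h2 : 1 ≤ q * q := Nat.one_le_iff_ne_zero.mpr (by positivity)
        zify [h1, h2]; ring
      rw [this]
      exact hpq.mul_right _
    obtain ⟨ζ, hζ⟩ := exists_prime_orderOf_dvd_card p hpu
    have hζq1 : ζ ^ (q - 1) = 1 := by
      apply orderOf_dvd_iff_pow_eq_one.mp
      rw [hζ]; exact hpq
    have hζp : ζ ^ p = 1 := by rw [← hζ]; exact pow_orderOf_eq_one ζ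
    have hζd : ζ ^ d = 1 := by
      obtain ⟨m, hm⟩ := hpd
      rw [hm, pow_mul, hζp, one_pow]
    have hζqK : (ζ : K) ^ q = (ζ : K) := by
      have h1 : (ζ : K) ^ (q - 1) = 1 := by
        rw [← Units.val_pow_eq_pow_val, hζq1, Units.val_one]
      calc (ζ : K) ^ q = (ζ : K) ^ (q - 1 + 1) := by congr 1; omega
        _ = (ζ : K) ^ (q - 1) * (ζ : K) := by rw [pow_succ]
        _ = (ζ : K) := by rw [h1, one_mul]
    have hζdK : (ζ : K) ^ d = 1 := by
      rw [← Units.val_pow_eq_pow_val, hζd, Units.val_one]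
    have hζne1 : (ζ : K) ≠ 1 := by
      intro h
      have : ζ = 1 := Units.ext h
      rw [this, orderOf_one] at hζ
      exact hp.one_lt.ne hζ
    have h1q : (1 : K) ^ q = 1 := one_pow q
    have := hinj (show (ζ : K) ∈ {y : K | y ^ q = y} from hζqK)
      (show (1 : K) ∈ {y : K | y ^ q = y} from h1q)
      (show ((ζ : K)) ^ d = (1 : K) ^ d by rw [hζdK, one_pow])
    exact hζne1 this
  exact ⟨hgcd, hmaps, hinj, hsurj⟩
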